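/- Sufficient FKL reduction in bandits: for policies π_old, π_new on a finite action set with Boltzmann target B = B_τq, if KL(π_old‖B) + ∑_a B(a)log π_old(a) ≥ 0, FKL(π_new‖B) ≤ FKL(π_old‖B), and FKL(π_old‖B) − FKL(π_new‖B) ≥ FKL(π_old‖B) − (1/2)·((τ/‖q‖_∞)(KL(π_old‖B) + ∑_a B(a)log π_old(a)))², then KL(π_new‖B) ≤ KL(π_old‖B). -/

import Mathlib

open Finset

noncomputable def boltzmann {A : Type*} [Fintype A] (Q : A → ℝ) (τ : ℝ) (a : A) : ℝ :=
  Real.exp (Q a / τ) / ∑ b, Real.exp (Q b / τ)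

/-- `log t ≥ 1 - 1/t` for `t > 0`. -/
lemma aux_one_sub_inv_le_log {t : ℝ} (ht : 0 < t) : 1 - t⁻¹ ≤ Real.log t := by
  have h := Real.log_le_sub_one_of_pos (inv_pos.2 ht)
  rw [Real.log_inv] at h
  linarith

/-- `H t = (t+1) log t - 2(t-1)` is monotone on `(0,∞)`. -/
lemma aux_H_mono : MonotoneOn (fun t : ℝ => (t + 1) * Real.log t - 2 * (t - 1)) (Set.Ioi 0) := by
  have hd : ∀ t ∈ Set.Ioi (0:ℝ), HasDerivAt (fun t : ℝ => (t + 1) * Real.log t - 2 * (t - 1))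
      (1 * Real.log t + (t + 1) * t⁻¹ - 2 * 1) t := by
    intro t ht
    exact (((hasDerivAt_id t).add_const 1).mul (Real.hasDerivAt_log (ne_of_gt ht))).sub
      (((hasDerivAt_id t).sub_const 1).const_mul 2)
  apply monotoneOn_of_deriv_nonneg (convex_Ioi 0)
  · exact fun t ht => ((hd t ht).differentiableAt).continuousAt.continuousWithinAt
  · rw [interior_Ioi]
    exact fun t ht => ((hd t ht).differentiableAt).differentiableWithinAt
  · rw [interior_Ioi]
    intro t ht
    rw [(hd t ht).deriv]
    have h1 := aux_one_sub_inv_le_log ht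
    have ht' : t ≠ 0 := ne_of_gt ht
    have h2 : (t + 1) * t⁻¹ = 1 + t⁻¹ := by field_simp
    rw [h2]
    linarith

lemma aux_H_sign_ge {t : ℝ} (ht : 1 ≤ t) : 0 ≤ (t + 1) * Real.log t - 2 * (t - 1) := by
  have h := aux_H_mono (by norm_num : (1:ℝ) ∈ Set.Ioi 0) (Set.mem_Ioi.2 (by linarith)) ht
  simp only [Real.log_one] at h
  linarith

lemma aux_H_sign_le {t : ℝ} (ht0 : 0 < t) (ht : t ≤ 1) :
    (t + 1) * Real.log t - 2 * (t - 1) ≤ 0 := by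
  have h := aux_H_mono (Set.mem_Ioi.2 ht0) (by norm_num : (1:ℝ) ∈ Set.Ioi 0) ht
  simp only [Real.log_one] at h
  linarith

/-- `G t = (2t+4)(t log t - t + 1) - 3(t-1)² ≥ 0` for `t > 0`. -/
lemma aux_G_nonneg {t : ℝ} (ht : 0 < t) :
    0 ≤ (2 * t + 4) * (t * Real.log t - t + 1) - 3 * (t - 1) ^ 2 := by
  set G : ℝ → ℝ := fun t => (2 * t + 4) * (t * Real.log t - t + 1) - 3 * (t - 1) ^ 2 with hG
  have hdiff : ∀ x : ℝ, x ≠ 0 → HasDerivAt G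
      (2 * 1 * (x * Real.log x - x + 1) + (2 * x + 4) * (Real.log x + 1 - 1)
        - 3 * ((2 : ℕ) * (x - 1) ^ (2 - 1) * 1)) x := by
    intro x hx0
    have h := ((((hasDerivAt_id x).const_mul 2).add_const 4).mul
      (((Real.hasDerivAt_mul_log hx0).sub (hasDerivAt_id x)).add_const 1)).sub
      ((((hasDerivAt_id x).sub_const 1).pow 2).const_mul 3)
    convert h using 1
    · rfl
    · ext y; simp
    · ext y; simp [hG]
    · simp
  have hderiv : ∀ x : ℝ, x ≠ 0 → deriv G x =
      4 * ((x + 1) * Real.log x - 2 * (x - 1)) := by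
    intro x hx0
    rw [(hdiff x hx0).deriv]
    norm_num
    ring
  have hG1 : G 1 = 0 := by simp [hG]
  rcases le_or_gt 1 t with h1 | h1
  · have hm : MonotoneOn G (Set.Ici 1) := by
      apply monotoneOn_of_deriv_nonneg (convex_Ici 1)
      · exact fun x hx => (hdiff x (by rw [Set.mem_Ici] at hx; positivity)).differentiableAt.continuousAt.continuousWithinAt
      · rw [interior_Ici]
        exact fun x hx => (hdiff x (by rw [Set.mem_Ioi] at hx; positivity)).differentiableAt.differentiableWithinAt
      · rw [interior_Ici]
        intro x hx
        rw [Set.mem_Ioi] at hx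
        rw [hderiv x (by positivity)]
        have := aux_H_sign_ge hx.le
        linarith
    have := hm (by norm_num : (1:ℝ) ∈ Set.Ici 1) (Set.mem_Ici.2 h1) h1
    rw [hG1] at this; exact this
  · have hm : AntitoneOn G (Set.Ioc 0 1) := by
      apply antitoneOn_of_deriv_nonpos (convex_Ioc 0 1)
      · exact fun x hx => (hdiff x (ne_of_gt hx.1)).differentiableAt.continuousAt.continuousWithinAt
      · rw [interior_Ioc]
        exact fun x hx => (hdiff x (ne_of_gt hx.1)).differentiableAt.differentiableWithinAt
      · rw [interior_Ioc]
        intro x hx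
        rw [hderiv x (ne_of_gt hx.1)]
        have := aux_H_sign_le hx.1 hx.2.le
        linarith
    have := hm (Set.mem_Ioc.2 ⟨ht, h1.le⟩) (by norm_num : (1:ℝ) ∈ Set.Ioc 0 1) h1.le
    rw [hG1] at this; exact this

/-- Pointwise refined Pinsker bound: `3(b-p)² ≤ (2b+4p)(b log(b/p) - b + p)`. -/
lemma aux_pointwise {b p : ℝ} (hb : 0 < b) (hp : 0 < p) :
    3 * (b - p) ^ 2 ≤ (2 * b + 4 * p) * (b * Real.log (b / p) - b + p) := by
  have ht : 0 < b / p := div_pos hb hp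
  have hG := aux_G_nonneg ht
  have hkey : (2 * b + 4 * p) * (b * Real.log (b / p) - b + p) - 3 * (b - p) ^ 2
      = p ^ 2 * ((2 * (b / p) + 4) * ((b / p) * Real.log (b / p) - b / p + 1)
          - 3 * (b / p - 1) ^ 2) := by
    field_simp
  nlinarith [sq_nonneg p]

/-- Gibbs' inequality (nonnegativity of KL) for positive finite vectors. -/
lemma aux_gibbs {A : Type*} [Fintype A] {x y : A → ℝ} (hx : ∀ a, 0 < x a)
    (hy : ∀ a, 0 < y a) (hsum : ∑ a, y a ≤ ∑ a, x a) :
    0 ≤ ∑ a, x a * Real.log (x a / y a) := by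
  have h : ∀ a ∈ Finset.univ, x a - y a ≤ x a * Real.log (x a / y a) := by
    intro a _
    have hlog := Real.log_le_sub_one_of_pos (div_pos (hy a) (hx a))
    have h2 : Real.log (y a / x a) = -Real.log (x a / y a) := by
      rw [← Real.log_inv, inv_div]
    rw [h2] at hlog
    have h3 := mul_le_mul_of_nonneg_left hlog (hx a).le
    have h4 : x a * (y a / x a - 1) = y a - x a := by
      rw [mul_sub, mul_div_cancel₀ _ (hx a).ne', mul_one]
    rw [h4] at h3
    linarith
  have h5 := Finset.sum_le_sum h
  rw [Finset.sum_sub_distrib] at h5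
  linarith

set_option maxHeartbeats 1000000 in
/-- Sufficient FKL reduction in bandits: with `B = B_τ q`, if
`KL(π_old‖B) + ∑ₐ B(a) log π_old(a) ≥ 0`, `FKL(π_new‖B) ≤ FKL(π_old‖B)`, and the FKL
reduction is at least
`FKL(π_old‖B) − (1/2)((τ/‖q‖_∞)(KL(π_old‖B) + ∑ₐ B(a) log π_old(a)))²`,
then `KL(π_new‖B) ≤ KL(π_old‖B)`. -/
theorem sufficient_fkl_reduction_bandits
    {A : Type*} [Fintype A] [Nonempty A]
    (τ : ℝ) (hτ : 0 < τ) (q : A → ℝ)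
    (πold πnew : A → ℝ)
    (hπold : ∀ a, 0 < πold a) (hπold1 : ∑ a, πold a = 1)
    (hπnew : ∀ a, 0 < πnew a) (hπnew1 : ∑ a, πnew a = 1)
    (hpos : 0 ≤ (∑ a, πold a * Real.log (πold a / boltzmann q τ a))
              + ∑ a, boltzmann q τ a * Real.log (πold a))
    (hFKLle : (∑ a, boltzmann q τ a * Real.log (boltzmann q τ a / πnew a))
            ≤ ∑ a, boltzmann q τ a * Real.log (boltzmann q τ a / πold a))
    (hRed : (∑ a, boltzmann q τ a * Real.log (boltzmann q τ a / πold a))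
              - (∑ a, boltzmann q τ a * Real.log (boltzmann q τ a / πnew a))
          ≥ (∑ a, boltzmann q τ a * Real.log (boltzmann q τ a / πold a))
              - (1 / 2) *
                ((τ / (Finset.univ.sup' Finset.univ_nonempty fun a => |q a|)) *
                  ((∑ a, πold a * Real.log (πold a / boltzmann q τ a))
                    + ∑ a, boltzmann q τ a * Real.log (πold a))) ^ 2) :
    (∑ a, πnew a * Real.log (πnew a / boltzmann q τ a))
      ≤ ∑ a, πold a * Real.log (πold a / boltzmann q τ a) := by
  classical
  set Z : ℝ := ∑ b, Real.exp (q b / τ) with hZdef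
  have hZ : 0 < Z := Finset.sum_pos (fun b _ => Real.exp_pos _) Finset.univ_nonempty
  set B : A → ℝ := boltzmann q τ with hBdef
  have hBa : ∀ a, B a = Real.exp (q a / τ) / Z := fun a => by
    rw [hBdef]; simp only [boltzmann, hZdef]
  have hB : ∀ a, 0 < B a := fun a => by rw [hBa a]; exact div_pos (Real.exp_pos _) hZ
  have hB1 : ∑ a, B a = 1 := by
    calc ∑ a, B a = ∑ a, Real.exp (q a / τ) / Z := Finset.sum_congr rfl fun a _ => hBa a
      _ = Z / Z := by rw [← Finset.sum_div, ← hZdef]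
      _ = 1 := div_self hZ.ne'
  have hlogB : ∀ a, Real.log (B a) = q a / τ - Real.log Z := fun a => by
    rw [hBa a, Real.log_div (Real.exp_pos _).ne' hZ.ne', Real.log_exp]
  set M : ℝ := Finset.univ.sup' Finset.univ_nonempty fun a => |q a| with hMdef
  set KLold : ℝ := ∑ a, πold a * Real.log (πold a / B a) with hKLold
  set S : ℝ := ∑ a, B a * Real.log (πold a) with hS
  set FKLold : ℝ := ∑ a, B a * Real.log (B a / πold a) with hFKLoldd
  set FKLnew : ℝ := ∑ a, B a * Real.log (B a / πnew a) with hFKLnewd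
  have hFKLold0 : 0 ≤ FKLold := aux_gibbs hB hπold (by rw [hB1, hπold1])
  have hFKLnew0 : 0 ≤ FKLnew := aux_gibbs hB hπnew (by rw [hB1, hπnew1])
  have hM0 : 0 ≤ M :=
    le_trans (abs_nonneg (q (Classical.arbitrary A)))
      (Finset.le_sup' (fun a => |q a|) (Finset.mem_univ _))
  -- expansions
  have hEnew : ∑ a, πnew a * Real.log (πnew a / B a)
      = (∑ a, πnew a * Real.log (πnew a)) - (∑ a, πnew a * (q a / τ)) + Real.log Z := by
    calc ∑ a, πnew a * Real.log (πnew a / B a)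
        = ∑ a, (πnew a * Real.log (πnew a) - πnew a * (q a / τ) + πnew a * Real.log Z) :=
          Finset.sum_congr rfl fun a _ => by
            rw [Real.log_div (hπnew a).ne' (hB a).ne', hlogB a]; ring
      _ = _ := by
          rw [Finset.sum_add_distrib, Finset.sum_sub_distrib, ← Finset.sum_mul, hπnew1, one_mul]
  have hEB : ∑ a, B a * Real.log (B a) = (∑ a, B a * (q a / τ)) - Real.log Z := by
    calc ∑ a, B a * Real.log (B a)
        = ∑ a, (B a * (q a / τ) - B a * Real.log Z) :=
          Finset.sum_congr rfl fun a _ => by rw [hlogB a]; ring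
      _ = _ := by rw [Finset.sum_sub_distrib, ← Finset.sum_mul, hB1, one_mul]
  have hEFold : FKLold = (∑ a, B a * Real.log (B a)) - S := by
    rw [hFKLoldd, hS, ← Finset.sum_sub_distrib]
    exact Finset.sum_congr rfl fun a _ => by
      rw [Real.log_div (hB a).ne' (hπold a).ne']; ring
  have hEFnew : FKLnew = (∑ a, B a * Real.log (B a)) - ∑ a, B a * Real.log (πnew a) := by
    rw [hFKLnewd, ← Finset.sum_sub_distrib]
    exact Finset.sum_congr rfl fun a _ => by
      rw [Real.log_div (hB a).ne' (hπnew a).ne']; ring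
  -- Pinsker-type bound
  have hT : (∑ a, |B a - πnew a|) ^ 2 ≤ 2 * FKLnew := by
    have hw : ∀ a, (0:ℝ) < (2 * B a + 4 * πnew a) / 3 := fun a => by
      have := hB a; have := hπnew a; positivity
    have hsed := Finset.sq_sum_div_le_sum_sq_div Finset.univ (fun a => |B a - πnew a|)
      (g := fun a => (2 * B a + 4 * πnew a) / 3) (fun a _ => hw a)
    have hws : ∑ a, (2 * B a + 4 * πnew a) / 3 = 2 := by
      have h6 : ∑ a, (2 * B a + 4 * πnew a) = 6 := by
        rw [Finset.sum_add_distrib, ← Finset.mul_sum, ← Finset.mul_sum, hB1, hπnew1]; norm_num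
      rw [← Finset.sum_div, h6]; norm_num
    have hpt : ∀ a ∈ Finset.univ, |B a - πnew a| ^ 2 / ((2 * B a + 4 * πnew a) / 3)
        ≤ B a * Real.log (B a / πnew a) - B a + πnew a := by
      intro a _
      have h := aux_pointwise (hB a) (hπnew a)
      rw [sq_abs, div_le_iff₀ (hw a)]
      nlinarith
    have hsum_pt := Finset.sum_le_sum hpt
    have hrhs : ∑ a, (B a * Real.log (B a / πnew a) - B a + πnew a) = FKLnew := by
      rw [Finset.sum_add_distrib, Finset.sum_sub_distrib, hB1, hπnew1, hFKLnewd]; ring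
    rw [hws] at hsed
    rw [hrhs] at hsum_pt
    have := hsed.trans hsum_pt
    linarith
  have hTsqrt : ∑ a, |B a - πnew a| ≤ Real.sqrt (2 * FKLnew) :=
    Real.le_sqrt_of_sq_le hT
  have hDelta : ∑ a, (B a - πnew a) * (q a / τ) ≤ M / τ * Real.sqrt (2 * FKLnew) := by
    have h1 : ∑ a, (B a - πnew a) * (q a / τ) ≤ ∑ a, |B a - πnew a| * (M / τ) := by
      apply Finset.sum_le_sum
      intro a _
      have hq : |q a| ≤ M := Finset.le_sup' (fun a => |q a|) (Finset.mem_univ a)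
      calc (B a - πnew a) * (q a / τ) ≤ |(B a - πnew a) * (q a / τ)| := le_abs_self _
        _ = |B a - πnew a| * (|q a| / τ) := by
            rw [abs_mul, abs_div, abs_of_pos hτ]
        _ ≤ |B a - πnew a| * (M / τ) := by
            gcongr
    rw [← Finset.sum_mul] at h1
    calc ∑ a, (B a - πnew a) * (q a / τ) ≤ (∑ a, |B a - πnew a|) * (M / τ) := h1
      _ ≤ Real.sqrt (2 * FKLnew) * (M / τ) :=
          mul_le_mul_of_nonneg_right hTsqrt (by positivity)
      _ = M / τ * Real.sqrt (2 * FKLnew) := mul_comm _ _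
  have hsplit : ∑ a, (B a - πnew a) * (q a / τ)
      = (∑ a, B a * (q a / τ)) - ∑ a, πnew a * (q a / τ) := by
    rw [← Finset.sum_sub_distrib]
    exact Finset.sum_congr rfl fun a _ => by ring
  have hnegent : ∑ a, πnew a * Real.log (πnew a) ≤ 0 := by
    apply Finset.sum_nonpos
    intro a _
    have hle1 : πnew a ≤ 1 := by
      rw [← hπnew1]
      exact Finset.single_le_sum (fun i _ => (hπnew i).le) (Finset.mem_univ a)
    exact mul_nonpos_iff.2 (Or.inl ⟨(hπnew a).le, Real.log_nonpos (hπnew a).le hle1⟩)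
  rcases eq_or_lt_of_le hM0 with hMeq | hMpos
  · -- M = 0 : q ≡ 0
    have hq0 : ∀ a, q a = 0 := fun a => by
      have h1 : |q a| ≤ M := Finset.le_sup' (fun a => |q a|) (Finset.mem_univ a)
      have h2 : (0:ℝ) ≤ |q a| := abs_nonneg (q a)
      exact abs_eq_zero.1 (le_antisymm (by linarith) h2)
    have hD0 : ∑ a, (B a - πnew a) * (q a / τ) = 0 :=
      Finset.sum_eq_zero fun a _ => by rw [hq0 a, zero_div, mul_zero]
    linarith [hEnew, hEB, hsplit, hD0, hnegent, hFKLold0, hpos, hEFold]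
  · have hc0 : 0 ≤ τ / M * (KLold + S) := mul_nonneg (by positivity) hpos
    have hFn : 2 * FKLnew ≤ (τ / M * (KLold + S)) ^ 2 := by nlinarith [hRed]
    have hsq : Real.sqrt (2 * FKLnew) ≤ τ / M * (KLold + S) := by
      rw [show τ / M * (KLold + S) = Real.sqrt ((τ / M * (KLold + S)) ^ 2) from
        (Real.sqrt_sq hc0).symm]
      exact Real.sqrt_le_sqrt hFn
    have hMτ : M / τ * (τ / M * (KLold + S)) = KLold + S := by
      field_simp
    have hfinal : M / τ * Real.sqrt (2 * FKLnew) ≤ KLold + S := by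
      calc M / τ * Real.sqrt (2 * FKLnew) ≤ M / τ * (τ / M * (KLold + S)) :=
          mul_le_mul_of_nonneg_left hsq (by positivity)
        _ = KLold + S := hMτ
    linarith [hEnew, hEB, hsplit, hDelta, hnegent, hFKLold0, hfinal, hEFold]
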